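/- Let d_1,…,d_n be reals with d_1 = d_n = 1 and d_i ≠ 0 for all i. Then D·G = G·D = I, i.e. the matrix G is the two-sided inverse of D. -/

import Mathlib

open Finset Matrix

/-- The matrix `D` with entries `d_{ij}`: `0` for `i < j`, `d_i` for `i = j`, and
`-d_j · (∏_{k=j+1}^{i-1} (1 - d_k)) · d_i` for `i > j`. -/
def Dmat (n : ℕ) (d : Fin n → ℝ) : Matrix (Fin n) (Fin n) ℝ :=
  Matrix.of fun i j =>
    if i < j then 0
    else if i = j then d i
    else -(d j) * (∏ k ∈ Finset.Ioo j i, (1 - d k)) * d i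

noncomputable def Gmat (n : ℕ) (d : Fin n → ℝ) : Matrix (Fin n) (Fin n) ℝ :=
  Matrix.of fun i j => if i = j then 1 / d i else if j < i then 1 else 0

private lemma keyNat (e : ℕ → ℝ) :
    ∀ t j i : ℕ, j < i → i - j = t + 1 →
    (∏ k ∈ Ioo j i, (1 - e k)) + ∑ k ∈ Ioo j i, e k * ∏ m ∈ Ioo k i, (1 - e m) = 1 := by
  intro t
  induction t with
  | zero =>
    intro j i hji h
    have : i = j + 1 := by omega
    subst this
    rw [← Finset.Ico_add_one_left_eq_Ioo, Finset.Ico_self]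
    simp
  | succ t ih =>
    intro j i hji h
    have hj1 : j + 1 < i := by omega
    have hIoo : Ioo j i = insert (j + 1) (Ioo (j + 1) i) := by
      rw [Finset.Ioo_insert_left hj1, ← Finset.Ico_add_one_left_eq_Ioo]
    have hmem : (j + 1) ∉ Ioo (j + 1) i := by simp
    rw [hIoo, Finset.prod_insert hmem, Finset.sum_insert hmem]
    have := ih (j + 1) i hj1 (by omega)
    ring_nf
    ring_nf at this
    linarith [this]

private lemma keyFin (n : ℕ) (d : Fin n → ℝ) (j i : Fin n) (hji : j < i) :
    (∏ k ∈ Finset.Ioo j i, (1 - d k)) +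
      ∑ k ∈ Finset.Ioo j i, d k * ∏ m ∈ Finset.Ioo k i, (1 - d m) = 1 := by
  set e : ℕ → ℝ := fun k => if h : k < n then d ⟨k, h⟩ else 0 with he
  have hP : ∀ a b : Fin n, ∏ k ∈ Finset.Ioo a b, (1 - d k) = ∏ k ∈ Ioo (a : ℕ) (b : ℕ), (1 - e k) := by
    intro a b
    rw [← Fin.map_valEmbedding_Ioo, Finset.prod_map]
    refine Finset.prod_congr rfl fun x _ => ?_
    simp [he, x.isLt]
  have hS : ∑ k ∈ Finset.Ioo j i, d k * ∏ m ∈ Finset.Ioo k i, (1 - d m)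
      = ∑ k ∈ Ioo (j : ℕ) (i : ℕ), e k * ∏ m ∈ Ioo k (i : ℕ), (1 - e m) := by
    rw [← Fin.map_valEmbedding_Ioo, Finset.sum_map]
    refine Finset.sum_congr rfl fun x _ => ?_
    rw [hP x i]
    simp [he, x.isLt]
  rw [hP, hS]
  have hlt : (j : ℕ) < (i : ℕ) := hji
  exact keyNat e ((i : ℕ) - (j : ℕ) - 1) j i hlt (by omega)

theorem stmt_5 (n : ℕ) (hn : 2 ≤ n) (d : Fin n → ℝ)
    (hd1 : d ⟨0, by omega⟩ = 1) (hdn : d ⟨n - 1, by omega⟩ = 1)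
    (hd : ∀ i : Fin n, d i ≠ 0) :
    Dmat n d * Gmat n d = 1 ∧ Gmat n d * Dmat n d = 1 := by
  have hDG : Dmat n d * Gmat n d = 1 := by
    ext i j
    rw [Matrix.mul_apply, Matrix.one_apply]
    rcases lt_trichotomy i j with hij | rfl | hij
    · rw [if_neg (by exact fun h => absurd h hij.ne)]
      refine Finset.sum_eq_zero fun k _ => ?_
      rcases lt_or_ge i k with hk | hk
      · have : Dmat n d i k = 0 := by simp [Dmat, hk]
        rw [this, zero_mul]
      · have hkj : k < j := lt_of_le_of_lt hk hij
        have : Gmat n d k j = 0 := by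
          simp [Gmat, hkj.ne, not_lt_of_gt hkj]
        rw [this, mul_zero]
    · rw [if_pos rfl]
      rw [Finset.sum_eq_single i]
      · simp [Dmat, Gmat, hd i]
      · intro k _ hk
        rcases lt_or_gt_of_ne hk with hk' | hk'
        · have : Gmat n d k i = 0 := by simp [Gmat, hk'.ne, not_lt_of_gt hk']
          rw [this, mul_zero]
        · have : Dmat n d i k = 0 := by simp [Dmat, hk']
          rw [this, zero_mul]
      · simp
    · rw [if_neg (by exact fun h => absurd h.symm hij.ne)]
      have hsub : ∑ k, Dmat n d i k * Gmat n d k j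
          = ∑ k ∈ Finset.Icc j i, Dmat n d i k * Gmat n d k j := by
        symm
        refine Finset.sum_subset (Finset.subset_univ _) fun k _ hk => ?_
        rw [Finset.mem_Icc, not_and_or] at hk
        rcases hk with hk | hk
        · have hkj : k < j := lt_of_not_ge hk
          have : Gmat n d k j = 0 := by simp [Gmat, hkj.ne, not_lt_of_gt hkj]
          rw [this, mul_zero]
        · have hik : i < k := lt_of_not_ge hk
          have : Dmat n d i k = 0 := by simp [Dmat, hik]
          rw [this, zero_mul]
      rw [hsub]
      have hIcc : Finset.Icc j i = insert j (insert i (Finset.Ioo j i)) := by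
        rw [Finset.Ioo_insert_right hij, Finset.Ioc_insert_left hij.le]
      have hjnot : j ∉ insert i (Finset.Ioo j i) := by
        simp only [Finset.mem_insert, Finset.mem_Ioo]
        push_neg
        exact ⟨hij.ne, fun h => absurd h (lt_irrefl j)⟩
      have hinot : i ∉ Finset.Ioo j i := by simp
      rw [hIcc, Finset.sum_insert hjnot, Finset.sum_insert hinot]
      have h1 : Dmat n d i j * Gmat n d j j = -(∏ k ∈ Finset.Ioo j i, (1 - d k)) * d i := by
        simp only [Dmat, Gmat, Matrix.of_apply, if_neg (not_lt_of_gt hij),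
          if_neg hij.ne', if_pos rfl, if_true]
        field_simp [hd j]
      have h2 : Dmat n d i i * Gmat n d i j = d i := by
        simp [Dmat, Gmat, hij.ne', hij]
      have h3 : ∑ k ∈ Finset.Ioo j i, Dmat n d i k * Gmat n d k j
          = -((∑ k ∈ Finset.Ioo j i, d k * ∏ m ∈ Finset.Ioo k i, (1 - d m)) * d i) := by
        rw [Finset.sum_mul, ← Finset.sum_neg_distrib]
        refine Finset.sum_congr rfl fun k hk => ?_
        obtain ⟨hjk, hki⟩ := Finset.mem_Ioo.mp hk
        simp only [Dmat, Gmat, Matrix.of_apply, if_neg (not_lt_of_gt hki), if_neg hki.ne',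
          if_neg hjk.ne', if_pos hjk]
        ring
      rw [h1, h2, h3]
      have hkey := keyFin n d j i hij
      linear_combination -(d i) * hkey
  refine ⟨hDG, mul_eq_one_comm.mp hDG⟩
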